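/- arXiv:1410.3928 — 4 statements merged into one kernel-verified Lean document; each statement's English description precedes it below -/
import Mathlib

section
/- Let H be a self-adjoint operator on a finite-dimensional complex Hilbert space and A a self-adjoint operator. Then for every positive integer n, |Tr(A e^{-βH})| ≤ (Tr((A e^{-βH/(2n)})^{2n}))^{1/(2n)} · (Tr(e^{-βH}))^{1-1/(2n)}. -/
open Matrix

section Helpers

variable {d : ℕ}

lemma key_real (m : ℕ) (hm : 2 ≤ m) (hme : Even m) (c μ : Fin d → ℝ) (hμ : ∀ i, 0 ≤ μ i)
    (p : Fin d → Fin d → ℝ) (hp : ∀ j i, 0 ≤ p j i)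
    (hrow : ∀ j, ∑ i, p j i = 1) (hcol : ∀ i, ∑ j, p j i = 1) :
    |∑ j, c j * ∑ i, p j i * μ i ^ (m - 1)| ≤
      (∑ j, c j ^ m) ^ ((1 : ℝ) / m) * (∑ i, μ i ^ m) ^ (1 - (1 : ℝ) / m) := by
  have hm1 : (1 : ℝ) < m := by exact_mod_cast hm.trans_lt' one_lt_two
  have hm0 : (0 : ℝ) < m := zero_lt_one.trans hm1
  have hmsub : ((m - 1 : ℕ) : ℝ) = (m : ℝ) - 1 := by
    have : 1 ≤ m := le_trans one_le_two hm
    push_cast [Nat.cast_sub this]; ring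
  set q : ℝ := (m : ℝ) / ((m : ℝ) - 1) with hqdef
  have hpq : (m : ℝ).HolderConjugate q := Real.HolderConjugate.conjExponent hm1
  have hq1 : 1 ≤ q := hpq.symm.lt.le
  set w : Fin d → ℝ := fun j => ∑ i, p j i * μ i ^ (m - 1) with hwdef
  have hw : ∀ j, 0 ≤ w j := fun j =>
    Finset.sum_nonneg fun i _ => mul_nonneg (hp j i) (pow_nonneg (hμ i) _)
  have step1 : |∑ j, c j * w j| ≤ ∑ j, |c j| * w j := by
    refine (Finset.abs_sum_le_sum_abs _ _).trans (le_of_eq ?_)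
    exact Finset.sum_congr rfl fun j _ => by rw [abs_mul, abs_of_nonneg (hw j)]
  have step2 : ∑ j, |c j| * w j ≤
      (∑ j, |c j| ^ (m : ℝ)) ^ (1 / (m : ℝ)) * (∑ j, w j ^ q) ^ (1 / q) :=
    Real.inner_le_Lp_mul_Lq_of_nonneg _ hpq (fun j _ => abs_nonneg _) (fun j _ => hw j)
  have habs : (∑ j, |c j| ^ (m : ℝ)) = ∑ j, c j ^ m := by
    refine Finset.sum_congr rfl fun j _ => ?_
    rw [Real.rpow_natCast]
    exact Even.pow_abs hme _
  have step4 : ∀ j, w j ^ q ≤ ∑ i, p j i * μ i ^ m := by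
    intro j
    have := Real.rpow_arith_mean_le_arith_mean_rpow Finset.univ (p j)
      (fun i => μ i ^ (m - 1)) (fun i _ => hp j i) (hrow j)
      (fun i _ => pow_nonneg (hμ i) _) hq1
    refine this.trans (le_of_eq (Finset.sum_congr rfl fun i _ => ?_))
    show p j i * (μ i ^ (m - 1)) ^ q = p j i * μ i ^ m
    congr 1
    rw [← Real.rpow_natCast (μ i) (m - 1), ← Real.rpow_mul (hμ i), ← Real.rpow_natCast (μ i) m]
    congr 1
    rw [hmsub, hqdef, mul_comm, div_mul_cancel₀ _ (by linarith : (m:ℝ) - 1 ≠ 0)]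
  have step5 : ∑ j, w j ^ q ≤ ∑ i, μ i ^ m := by
    refine (Finset.sum_le_sum fun j _ => step4 j).trans (le_of_eq ?_)
    rw [Finset.sum_comm]
    refine Finset.sum_congr rfl fun i _ => ?_
    rw [← Finset.sum_mul, hcol, one_mul]
  have step6 : (∑ j, w j ^ q) ^ (1 / q) ≤ (∑ i, μ i ^ m) ^ (1 / q) :=
    Real.rpow_le_rpow (Finset.sum_nonneg fun j _ => Real.rpow_nonneg (hw j) _) step5
      (by positivity)
  have hq_inv : 1 / q = 1 - 1 / (m : ℝ) := by
    rw [hqdef]; field_simp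
  calc |∑ j, c j * w j| ≤ ∑ j, |c j| * w j := step1
    _ ≤ (∑ j, |c j| ^ (m : ℝ)) ^ (1 / (m : ℝ)) * (∑ j, w j ^ q) ^ (1 / q) := step2
    _ ≤ (∑ j, c j ^ m) ^ ((1 : ℝ) / m) * (∑ i, μ i ^ m) ^ (1 - (1 : ℝ) / m) := by
        rw [habs, ← hq_inv]
        exact mul_le_mul_of_nonneg_left step6
          (Real.rpow_nonneg (Finset.sum_nonneg fun j _ =>
            (Even.pow_abs hme (c j)) ▸ pow_nonneg (abs_nonneg _) _) _)

lemma myConjPow (V D : Matrix (Fin d) (Fin d) ℂ) (hV : star V * V = 1) (hV2 : V * star V = 1)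
    (k : ℕ) : (V * D * star V) ^ k = V * D ^ k * star V := by
  induction k with
  | zero => simp [hV2]
  | succ k ih =>
      rw [pow_succ, ih, pow_succ]
      calc V * D ^ k * star V * (V * D * star V)
          = V * D ^ k * (star V * V) * D * star V := by simp only [Matrix.mul_assoc]
        _ = V * (D ^ k * D) * star V := by rw [hV]; simp only [Matrix.mul_one, Matrix.mul_assoc]

lemma trace_UDU_VDV (f g : Fin d → ℂ) (U V : Matrix (Fin d) (Fin d) ℂ) :
    (U * Matrix.diagonal f * star U * (V * Matrix.diagonal g * star V)).trace
      = ∑ j, ∑ i, f j * g i *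
          ((star U * V) j i * star ((star U * V) j i)) := by
  have h1 : U * Matrix.diagonal f * star U * (V * Matrix.diagonal g * star V)
      = U * (Matrix.diagonal f * (star U * (V * (Matrix.diagonal g * star V)))) := by
    simp only [Matrix.mul_assoc]
  rw [h1, Matrix.trace_mul_comm]
  have h2 : (Matrix.diagonal f * (star U * (V * (Matrix.diagonal g * star V)))) * U
      = Matrix.diagonal f * ((star U * V) * Matrix.diagonal g * star (star U * V)) := by
    simp only [Matrix.star_mul, star_star, Matrix.mul_assoc]
  rw [h2]
  set W := star U * V with hW
  have h3 : ∀ j, (Matrix.diagonal f * (W * Matrix.diagonal g * star W)) j j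
      = ∑ i, f j * g i * (W j i * star (W j i)) := by
    intro j
    rw [Matrix.diagonal_mul, Matrix.mul_apply, Finset.mul_sum]
    refine Finset.sum_congr rfl fun i _ => ?_
    rw [Matrix.mul_diagonal, Matrix.star_apply]
    ring
  simp only [Matrix.trace, Matrix.diag, h3]

end Helpers


section EigNonneg
open scoped ComplexOrder

lemma eig_nonneg_of_sq {d : ℕ} (K R : Matrix (Fin d) (Fin d) ℂ) (hR : star R = R)
    (hRRK : R * R = K) (h : K.IsHermitian) (i : Fin d) : 0 ≤ h.eigenvalues i := by
  subst hRRK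
  have hps : (R * R).PosSemidef := by
    have := Matrix.posSemidef_conjTranspose_mul_self R
    rwa [← Matrix.star_eq_conjTranspose, hR] at this
  exact hps.eigenvalues_nonneg i

end EigNonneg

/-- Generalized Hölder inequality, self-adjoint version: for Hermitian matrices `H` and `A`,
`|Tr(A e^{-βH})| ≤ (Tr((A e^{-βH/(2n)})^{2n}))^{1/(2n)} · (Tr(e^{-βH}))^{1-1/(2n)}`. -/
theorem generalized_holder_selfAdjoint
    {d : ℕ} (H A : Matrix (Fin d) (Fin d) ℂ) (hH : H.IsHermitian) (hA : A.IsHermitian)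
    (β : ℝ) (hβ : 0 ≤ β) (n : ℕ) (hn : 0 < n) :
    ‖(A * NormedSpace.exp ((-β : ℂ) • H)).trace‖ ≤
      ‖((A * NormedSpace.exp ((-(β / (2 * n)) : ℂ) • H)) ^ (2 * n)).trace‖ ^ ((1 : ℝ) / (2 * n))
        * ‖(NormedSpace.exp ((-β : ℂ) • H)).trace‖ ^ ((1 : ℝ) - 1 / (2 * n)) := by
  have hnC : (n : ℂ) ≠ 0 := Nat.cast_ne_zero.mpr hn.ne'
  set r : ℂ := -(↑β / (2 * ↑n)) with hr
  have hrreal : r = ((-(β / (2 * n)) : ℝ) : ℂ) := by rw [hr]; push_cast; ring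
  have hrstar : star r = r := by rw [hrreal, Complex.star_def, Complex.conj_ofReal]
  have hsmulH : ∀ a b : ℂ, NormedSpace.exp ((a + b) • H)
      = NormedSpace.exp (a • H) * NormedSpace.exp (b • H) := by
    intro a b
    rw [add_smul]
    exact Matrix.exp_add_of_commute _ _ (((Commute.refl H).smul_left a).smul_right b)
  set R := NormedSpace.exp ((r / 2) • H) with hRdef
  set K := NormedSpace.exp (r • H) with hKdef
  have hRR : R * R = K := by
    rw [hRdef, hKdef, ← hsmulH]
    norm_num
  have hKpow : ∀ k : ℕ, K ^ k = NormedSpace.exp (((k : ℂ) * r) • H) := by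
    intro k
    induction k with
    | zero => simp [NormedSpace.exp_zero]
    | succ k ih =>
        rw [pow_succ, ih, hKdef, ← hsmulH]
        congr 2
        push_cast
        ring
  have hK2n : K ^ (2 * n) = NormedSpace.exp ((-↑β : ℂ) • H) := by
    rw [hKpow]
    congr 2
    rw [hr]
    push_cast
    field_simp
  have hRh : star R = R := by
    rw [hRdef, Matrix.star_eq_conjTranspose, ← Matrix.exp_conjTranspose]
    congr 1
    rw [Matrix.conjTranspose_smul, hH.eq]
    congr 1
    simp only [star_div₀, hrstar]
    norm_num
  have hKs : star K = K := by
    rw [hKdef, Matrix.star_eq_conjTranspose, ← Matrix.exp_conjTranspose]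
    rw [Matrix.conjTranspose_smul, hH.eq, hrstar]
  have hKh : K.IsHermitian := by
    show Kᴴ = K
    rw [← Matrix.star_eq_conjTranspose]
    exact hKs
  set C := R * A * R with hCdef
  have hRc : Rᴴ = R := by rw [← Matrix.star_eq_conjTranspose]; exact hRh
  have hCh : C.IsHermitian := by
    show Cᴴ = C
    rw [hCdef, Matrix.conjTranspose_mul, Matrix.conjTranspose_mul, hA.eq, hRc,
      ← Matrix.mul_assoc]
  have hRK : ∀ k : ℕ, R * K ^ k = K ^ k * R := by
    intro k
    rw [hKpow, hRdef, ← hsmulH, ← hsmulH, add_comm]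
  -- trace identity 1
  have hT1 : (C * K ^ (2 * n - 1)).trace = (A * NormedSpace.exp ((-↑β : ℂ) • H)).trace := by
    have e1 : C * K ^ (2 * n - 1) = R * (A * K ^ (2 * n - 1) * R) := by
      rw [hCdef]
      simp only [Matrix.mul_assoc]
      rw [hRK]
    rw [e1, Matrix.trace_mul_comm]
    have e2 : A * K ^ (2 * n - 1) * R * R = A * K ^ (2 * n) := by
      have hKK : K ^ (2 * n - 1) * K = K ^ (2 * n) := by
        rw [← pow_succ]
        congr 1
        omega
      rw [Matrix.mul_assoc (A * K ^ (2 * n - 1)) R R, hRR, Matrix.mul_assoc, hKK]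
    rw [e2, hK2n]
  -- trace identity 2
  have hCpow : ∀ k : ℕ, C ^ (k + 1) = R * ((A * K) ^ k * (A * R)) := by
    intro k
    induction k with
    | zero => simp [hCdef, Matrix.mul_assoc]
    | succ k ih =>
        rw [pow_succ, ih, hCdef, pow_succ]
        have h1 : R * (R * (A * R)) = K * (A * R) := by rw [← Matrix.mul_assoc, hRR]
        simp only [Matrix.mul_assoc]
        rw [h1]
  have hT2 : ((A * K) ^ (2 * n)).trace = (C ^ (2 * n)).trace := by
    have h2n : 2 * n = (2 * n - 1) + 1 := by omega
    rw [h2n, hCpow, Matrix.trace_mul_comm]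
    have e3 : (A * K) ^ (2 * n - 1) * (A * R) * R = (A * K) ^ (2 * n - 1) * (A * K) := by
      simp only [Matrix.mul_assoc, hRR]
    rw [e3, ← pow_succ]
  -- spectral decompositions
  set c : Fin d → ℝ := hCh.eigenvalues with hc
  set U : Matrix (Fin d) (Fin d) ℂ := (hCh.eigenvectorUnitary : Matrix (Fin d) (Fin d) ℂ)
    with hU
  have hCspec : C = U * Matrix.diagonal (RCLike.ofReal ∘ c) * star U := hCh.spectral_theorem
  have hU1 : U * star U = 1 := Matrix.mem_unitaryGroup_iff.mp hCh.eigenvectorUnitary.2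
  have hU2 : star U * U = 1 := Matrix.mem_unitaryGroup_iff'.mp hCh.eigenvectorUnitary.2
  set μ : Fin d → ℝ := hKh.eigenvalues with hμ
  set V : Matrix (Fin d) (Fin d) ℂ := (hKh.eigenvectorUnitary : Matrix (Fin d) (Fin d) ℂ)
    with hV
  have hKspec : K = V * Matrix.diagonal (RCLike.ofReal ∘ μ) * star V := hKh.spectral_theorem
  have hV1 : V * star V = 1 := Matrix.mem_unitaryGroup_iff.mp hKh.eigenvectorUnitary.2
  have hV2 : star V * V = 1 := Matrix.mem_unitaryGroup_iff'.mp hKh.eigenvectorUnitary.2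
  have hμ0 : ∀ i, 0 ≤ μ i := fun i => eig_nonneg_of_sq K R hRh hRR hKh i
  set W : Matrix (Fin d) (Fin d) ℂ := star U * V with hWdef
  set p : Fin d → Fin d → ℝ := fun j i => Complex.normSq (W j i) with hpdef
  have hp0 : ∀ j i, 0 ≤ p j i := fun j i => Complex.normSq_nonneg _
  have hWW : W * star W = 1 := by
    rw [hWdef, Matrix.star_mul, star_star]
    calc star U * V * (star V * U) = star U * (V * star V) * U := by
          simp only [Matrix.mul_assoc]
      _ = 1 := by rw [hV1, Matrix.mul_one, hU2]
  have hWW2 : star W * W = 1 := by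
    rw [hWdef, Matrix.star_mul, star_star]
    calc star V * U * (star U * V) = star V * (U * star U) * V := by
          simp only [Matrix.mul_assoc]
      _ = 1 := by rw [hU1, Matrix.mul_one, hV2]
  have hrow : ∀ j, ∑ i, p j i = 1 := by
    intro j
    have h := congrFun (congrFun hWW j) j
    rw [Matrix.mul_apply, Matrix.one_apply_eq] at h
    have h2 : (↑(∑ i, p j i) : ℂ) = 1 := by
      rw [← h]
      push_cast
      refine Finset.sum_congr rfl fun i _ => ?_
      rw [Matrix.star_apply, Complex.star_def]
      exact (Complex.mul_conj _).symm
    exact_mod_cast h2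
  have hcol : ∀ i, ∑ j, p j i = 1 := by
    intro i
    have h := congrFun (congrFun hWW2 i) i
    rw [Matrix.mul_apply, Matrix.one_apply_eq] at h
    have h2 : (↑(∑ j, p j i) : ℂ) = 1 := by
      rw [← h]
      push_cast
      refine Finset.sum_congr rfl fun j _ => ?_
      rw [Matrix.star_apply, Complex.star_def]
      exact Complex.normSq_eq_conj_mul_self
    exact_mod_cast h2
  -- trace values
  have hKpowspec : ∀ k : ℕ, K ^ k
      = V * Matrix.diagonal (fun i => ((μ i : ℂ)) ^ k) * star V := by
    intro k
    rw [hKspec, myConjPow V _ hV2 hV1, Matrix.diagonal_pow]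
    rfl
  have hUconj : ∀ D : Matrix (Fin d) (Fin d) ℂ, (U * D * star U).trace = D.trace := by
    intro D
    rw [Matrix.trace_mul_comm, ← Matrix.mul_assoc, hU2, Matrix.one_mul]
  have hVconj : ∀ D : Matrix (Fin d) (Fin d) ℂ, (V * D * star V).trace = D.trace := by
    intro D
    rw [Matrix.trace_mul_comm, ← Matrix.mul_assoc, hV2, Matrix.one_mul]
  have hTr1 : (C * K ^ (2 * n - 1)).trace
      = ((∑ j, c j * ∑ i, p j i * μ i ^ (2 * n - 1) : ℝ) : ℂ) := by
    rw [hCspec, hKpowspec, trace_UDU_VDV]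
    simp only [Function.comp_apply, Complex.star_def, Complex.mul_conj, hpdef]
    push_cast
    refine Finset.sum_congr rfl fun j _ => ?_
    rw [Finset.mul_sum]
    refine Finset.sum_congr rfl fun i _ => ?_
    push_cast
    rw [mul_comm ((Complex.normSq (W j i) : ℝ) : ℂ) ((μ i : ℂ) ^ (2 * n - 1)), ← mul_assoc]
    rfl
  have hCpowspec : C ^ (2 * n)
      = U * Matrix.diagonal (fun j => ((c j : ℂ)) ^ (2 * n)) * star U := by
    rw [hCspec, myConjPow U _ hU2 hU1, Matrix.diagonal_pow]
    rfl
  have hTr2 : ((A * K) ^ (2 * n)).trace = ((∑ j, c j ^ (2 * n) : ℝ) : ℂ) := by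
    rw [hT2, hCpowspec, hUconj, Matrix.trace_diagonal]
    push_cast
    rfl
  have hTr3 : (NormedSpace.exp ((-↑β : ℂ) • H)).trace = ((∑ i, μ i ^ (2 * n) : ℝ) : ℂ) := by
    rw [← hK2n, hKpowspec, hVconj, Matrix.trace_diagonal]
    push_cast
    rfl
  -- nonnegativity
  have hS2 : 0 ≤ ∑ j, c j ^ (2 * n) :=
    Finset.sum_nonneg fun j _ => (even_two_mul n).pow_nonneg _
  have hS3 : 0 ≤ ∑ i, μ i ^ (2 * n) :=
    Finset.sum_nonneg fun i _ => pow_nonneg (hμ0 i) _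
  -- final assembly
  rw [← hT1, hTr1, hTr2, hTr3, Complex.norm_real, Complex.norm_real, Complex.norm_real,
    Real.norm_eq_abs, Real.norm_eq_abs, Real.norm_eq_abs, abs_of_nonneg hS2, abs_of_nonneg hS3]
  have hcast : ((2 : ℝ) * n) = ((2 * n : ℕ) : ℝ) := by push_cast; ring
  rw [show (1 : ℝ) / (2 * (n:ℝ)) = (1 : ℝ) / ((2 * n : ℕ) : ℝ) from by rw [hcast]]
  exact key_real (2 * n) (by omega) (even_two_mul n) c μ hμ0 p hp0 hrow hcol
end

section
/- Let (c_k)_{k=0}^{2n} be nonnegative real numbers with c_0 > 0, satisfying c_k^2 ≤ c_{2k} c_0 for all k ≤ n and c_k^2 ≤ c_{2n} c_{2k-2n} for all n ≤ k ≤ 2n. Then c_1 ≤ c_0 (c_{2n}/c_0)^{1/(2n)}, i.e., c_1^{2n} ≤ c_0^{2n-1} c_{2n}. -/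
/-- Maximum-principle lemma from the Fröhlich–Lieb argument: if `(c_k)_{k=0}^{2n}` are
nonnegative with `c_0 > 0`, `c_k² ≤ c_{2k} c_0` for `k ≤ n` and `c_k² ≤ c_{2n} c_{2k-2n}`
for `n ≤ k ≤ 2n`, then `c_1^{2n} ≤ c_0^{2n-1} c_{2n}`. -/
theorem max_principle_sequence
    (n : ℕ) (hn : 0 < n) (c : ℕ → ℝ)
    (hnonneg : ∀ k ≤ 2 * n, 0 ≤ c k)
    (hc0 : 0 < c 0)
    (h1 : ∀ k ≤ n, (c k) ^ 2 ≤ c (2 * k) * c 0)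
    (h2 : ∀ k, n ≤ k → k ≤ 2 * n → (c k) ^ 2 ≤ c (2 * n) * c (2 * k - 2 * n)) :
    (c 1) ^ (2 * n) ≤ (c 0) ^ (2 * n - 1) * c (2 * n) := by
  rcases (hnonneg (2*n) le_rfl).eq_or_lt with h2n0 | h2npos
  · -- degenerate case: c (2n) = 0, show c 1 = 0
    set m := Nat.log 2 n + 1 with hm_def
    have hnm : n < 2 ^ m := Nat.lt_pow_succ_log_self (by norm_num) n
    have hm2n : 2 ^ m ≤ 2 * n := by
      have hlog := Nat.pow_log_le_self 2 hn.ne'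
      have : 2 ^ m = 2 * 2 ^ Nat.log 2 n := by rw [hm_def]; ring
      omega
    have hc1 : 0 ≤ c 1 := hnonneg 1 (by omega)
    have claim : ∀ j, j ≤ m → c 1 ^ (2 ^ j) ≤ c (2 ^ j) * c 0 ^ (2 ^ j - 1) := by
      intro j
      induction j with
      | zero => intro _; simp
      | succ j ih =>
        intro hj
        have h2j : 2 ^ j ≤ n := by
          have h1' : 2 ^ j ≤ 2 ^ Nat.log 2 n := Nat.pow_le_pow_right (by norm_num) (by omega)
          have h2' := Nat.pow_log_le_self 2 hn.ne'
          omega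
        have hih := ih (by omega)
        have hone : 1 ≤ 2 ^ j := Nat.one_le_two_pow
        have hsq : (c 1 ^ (2^j))^2 ≤ (c (2^j) * c 0 ^ (2^j - 1))^2 :=
          pow_le_pow_left₀ (pow_nonneg hc1 _) hih 2
        have hstep := h1 (2^j) h2j
        have htwo : 2 ≤ 2 ^ (j+1) := by
          have : 2 ^ (j+1) = 2 * 2 ^ j := by ring
          omega
        calc c 1 ^ (2 ^ (j+1)) = (c 1 ^ (2^j))^2 := by
              rw [← pow_mul, pow_succ]
          _ ≤ (c (2^j))^2 * (c 0 ^ (2^j-1))^2 := by rw [mul_pow] at hsq; exact hsq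
          _ ≤ (c (2*2^j) * c 0) * (c 0 ^ (2^j-1))^2 :=
              mul_le_mul_of_nonneg_right hstep (by positivity)
          _ = c (2^(j+1)) * c 0 ^ (2^(j+1) - 1) := by
              rw [show 2*2^j = 2^(j+1) from by ring,
                  show (2:ℕ)^(j+1) - 1 = (2^(j+1) - 2) + 1 from by omega,
                  show ((c 0)^(2^j-1))^2 = (c 0)^(2^(j+1)-2) from by
                    rw [← pow_mul]; congr 1; omega]
              rw [pow_succ]; ring
    have hcm : c (2 ^ m) = 0 := by
      have hb := h2 (2^m) (by omega) hm2n
      rw [← h2n0, zero_mul] at hb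
      have := sq_nonneg (c (2^m))
      have hsq0 : c (2^m) ^ 2 = 0 := le_antisymm hb this
      exact pow_eq_zero_iff (by norm_num) |>.mp hsq0
    have hc1z : c 1 = 0 := by
      have := claim m le_rfl
      rw [hcm, zero_mul] at this
      have hge : 0 ≤ c 1 ^ (2^m) := pow_nonneg hc1 _
      have heq : c 1 ^ (2^m) = 0 := le_antisymm this hge
      exact pow_eq_zero_iff (by positivity) |>.mp heq
    rw [hc1z, ← h2n0, mul_zero]
    exact le_of_eq (zero_pow (by omega))
  · -- main case: c (2n) > 0, maximum principle
    set D : ℝ := c 0 ^ (2*n) * c (2*n) ^ (2*n) with hD_def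
    have hD : 0 < D := by positivity
    set f : ℕ → ℝ := fun k => c k ^ (2*n) * c 0 ^ k * c (2*n) ^ (2*n - k) with hf_def
    have hf0 : f 0 = D := by simp [hf_def, hD_def]
    have hfnn : ∀ k ≤ 2*n, 0 ≤ f k := by
      intro k hk
      have := hnonneg k hk
      simp only [hf_def]
      positivity
    have key : ∀ m ≤ 2*n, ∃ j ≤ 2*n, f m ^ 2 ≤ f j * D := by
      intro m hm
      have hfm2 : f m ^ 2 = c m ^ (2*n*2) * c 0 ^ (m*2) * c (2*n) ^ ((2*n-m)*2) := by
        simp only [hf_def, mul_pow, ← pow_mul]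
      rcases le_or_gt m n with h | h
      · refine ⟨2*m, by omega, ?_⟩
        have hb : c m ^ (2*n*2) ≤ c (2*m) ^ (2*n) * c 0 ^ (2*n) := by
          have hp : (c m ^ 2) ^ (2*n) ≤ (c (2*m) * c 0) ^ (2*n) :=
            pow_le_pow_left₀ (sq_nonneg _) (h1 m h) _
          rw [← pow_mul, mul_pow, show 2*(2*n) = 2*n*2 from by ring] at hp
          exact hp
        calc f m ^ 2 = c m ^ (2*n*2) * (c 0 ^ (m*2) * c (2*n) ^ ((2*n-m)*2)) := by
              rw [hfm2]; ring
          _ ≤ (c (2*m) ^ (2*n) * c 0 ^ (2*n)) * (c 0 ^ (m*2) * c (2*n) ^ ((2*n-m)*2)) :=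
              mul_le_mul_of_nonneg_right hb (by positivity)
          _ = f (2*m) * D := by
              simp only [hf_def, hD_def]
              rw [show (2*n-m)*2 = (2*n - 2*m) + 2*n from by omega, pow_add,
                  show (m*2:ℕ) = 2*m from mul_comm m 2]
              ring
      · refine ⟨2*m - 2*n, by omega, ?_⟩
        have hb : c m ^ (2*n*2) ≤ c (2*n) ^ (2*n) * c (2*m-2*n) ^ (2*n) := by
          have hp : (c m ^ 2) ^ (2*n) ≤ (c (2*n) * c (2*m - 2*n)) ^ (2*n) :=
            pow_le_pow_left₀ (sq_nonneg _) (h2 m h.le hm) _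
          rw [← pow_mul, mul_pow, show 2*(2*n) = 2*n*2 from by ring] at hp
          exact hp
        calc f m ^ 2 = c m ^ (2*n*2) * (c 0 ^ (m*2) * c (2*n) ^ ((2*n-m)*2)) := by
              rw [hfm2]; ring
          _ ≤ (c (2*n) ^ (2*n) * c (2*m-2*n) ^ (2*n)) *
                (c 0 ^ (m*2) * c (2*n) ^ ((2*n-m)*2)) :=
              mul_le_mul_of_nonneg_right hb (by positivity)
          _ = f (2*m-2*n) * D := by
              simp only [hf_def, hD_def]
              rw [show (2*n:ℕ)-(2*m-2*n) = (2*n-m)*2 from by omega,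
                  show (m*2 : ℕ) = (2*m-2*n) + 2*n from by omega]
              rw [pow_add]; ring
    obtain ⟨m, hm_mem, hm_max⟩ :=
      Finset.exists_max_image (Finset.range (2*n+1)) f ⟨0, by simp⟩
    have hm2n : m ≤ 2*n := by simpa [Nat.lt_succ_iff] using hm_mem
    have hDM : D ≤ f m := by
      have := hm_max 0 (by simp)
      rwa [hf0] at this
    obtain ⟨j, hj, hkey⟩ := key m hm2n
    have hjM : f j ≤ f m := hm_max j (by simp [Nat.lt_succ_iff, hj])
    have hMD : f m ≤ D := by nlinarith [hkey, hjM, hDM, hD]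
    have hf1 : f 1 ≤ D := le_trans (hm_max 1 (by simp; omega)) hMD
    -- unfold f 1 ≤ D into the goal
    have hpos : 0 < c 0 * c (2*n) ^ (2*n-1) := by positivity
    apply le_of_mul_le_mul_right _ hpos
    calc c 1 ^ (2*n) * (c 0 * c (2*n) ^ (2*n-1))
        = f 1 := by simp only [hf_def]; rw [pow_one]; ring
      _ ≤ D := hf1
      _ = c 0 ^ (2*n-1) * c (2*n) * (c 0 * c (2*n) ^ (2*n-1)) := by
          have e0 : c 0 ^ (2*n) = c 0 ^ (2*n-1) * c 0 := by
            rw [← pow_succ]; congr 1; omega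
          have e1 : c (2*n) ^ (2*n) = c (2*n) ^ (2*n-1) * c (2*n) := by
            rw [← pow_succ]; congr 1; omega
          rw [hD_def, e0, e1]; ring
end

section
/- Let ς be a valid six-vertex configuration on T_{N,T} and let L ≤ N. If the sum of the spins on the first L vertical edges in row 1, Σ_{i=1}^L ς(E^v_{i,1}), equals L - 2k, then Σ_{i=1}^L ς(E^v_{i,2}) = L - 2k′ for some k′ ∈ {k-1, k, k+1}. -/
/-- A six-vertex configuration on the torus `T_{N,T}`. -/
structure SixVertexConfig (N T : ℕ) where
  σh : ZMod N → ZMod T → ℤ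
  σv : ZMod N → ZMod T → ℤ
  σh_pm : ∀ i j, σh i j = 1 ∨ σh i j = -1
  σv_pm : ∀ i j, σv i j = 1 ∨ σv i j = -1
  ice : ∀ i j, σh (i - 1) j - σh i j + σv i (j - 1) - σv i j = 0

/-- When passing from row 1 to row 2, the magnetization of the first `L` vertical edges
changes by at most `2`: if `Σ_{i=1}^L ς(E^v_{i,1}) = L - 2k` then
`Σ_{i=1}^L ς(E^v_{i,2}) = L - 2k'` with `k' ∈ {k-1, k, k+1}`. -/
theorem sixVertex_row_magnetization_step
    (N T : ℕ) (hN : 0 < N) (hT : 0 < T) (ς : SixVertexConfig N T)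
    (L : ℕ) (hL : L ≤ N) (k : ℤ)
    (hrow : ∑ i ∈ Finset.range L, ς.σv (((i : ℕ) + 1 : ℕ) : ZMod N) (1 : ZMod T)
      = (L : ℤ) - 2 * k) :
    ∃ k' : ℤ, (k' = k - 1 ∨ k' = k ∨ k' = k + 1) ∧
      ∑ i ∈ Finset.range L, ς.σv (((i : ℕ) + 1 : ℕ) : ZMod N) (2 : ZMod T)
        = (L : ℤ) - 2 * k' := by
  set f : ℕ → ℤ := fun n => ς.σh ((n : ℕ) : ZMod N) (2 : ZMod T) with hf
  have key : ∀ i : ℕ, ς.σv (((i : ℕ) + 1 : ℕ) : ZMod N) (2 : ZMod T)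
      = ς.σv (((i : ℕ) + 1 : ℕ) : ZMod N) (1 : ZMod T) + (f i - f (i + 1)) := by
    intro i
    have h := ς.ice (((i : ℕ) + 1 : ℕ) : ZMod N) (2 : ZMod T)
    have h1 : (((i : ℕ) + 1 : ℕ) : ZMod N) - 1 = ((i : ℕ) : ZMod N) := by
      push_cast; ring
    have h2 : (2 : ZMod T) - 1 = 1 := by ring
    rw [h1, h2] at h
    simp only [hf]
    linarith
  have hsum : ∑ i ∈ Finset.range L, ς.σv (((i : ℕ) + 1 : ℕ) : ZMod N) (2 : ZMod T)
      = ((L : ℤ) - 2 * k) + (f 0 - f L) := by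
    calc ∑ i ∈ Finset.range L, ς.σv (((i : ℕ) + 1 : ℕ) : ZMod N) (2 : ZMod T)
        = ∑ i ∈ Finset.range L, (ς.σv (((i : ℕ) + 1 : ℕ) : ZMod N) (1 : ZMod T)
            + (f i - f (i + 1))) := by
          exact Finset.sum_congr rfl fun i _ => key i
      _ = (∑ i ∈ Finset.range L, ς.σv (((i : ℕ) + 1 : ℕ) : ZMod N) (1 : ZMod T))
            + ∑ i ∈ Finset.range L, (f i - f (i + 1)) := Finset.sum_add_distrib
      _ = ((L : ℤ) - 2 * k) + (f 0 - f L) := by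
          rw [hrow, Finset.sum_range_sub' f]
  have h0 := ς.σh_pm ((0 : ℕ) : ZMod N) (2 : ZMod T)
  have hLh := ς.σh_pm ((L : ℕ) : ZMod N) (2 : ZMod T)
  have hf0 : f 0 = 1 ∨ f 0 = -1 := h0
  have hfL : f L = 1 ∨ f L = -1 := hLh
  refine ⟨k - (f 0 - f L) / 2, ?_, ?_⟩
  · rcases hf0 with h | h <;> rcases hfL with h' | h' <;> rw [h, h'] <;> norm_num
  · rw [hsum]
    rcases hf0 with h | h <;> rcases hfL with h' | h' <;> rw [h, h'] <;> ring_nf <;> norm_num <;> ring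
end

section
/- For any self-adjoint operator A on a finite-dimensional complex Hilbert space and any unit vector ψ, Tr(e^{-βA}) ≥ e^{-β⟨ψ, Aψ⟩} for all β ≥ 0. -/
open Matrix

/-- Peierls–Bogoliubov inequality: for a Hermitian matrix `A`, a unit vector `ψ`, and
`β ≥ 0`, `Tr(e^{-βA}) ≥ e^{-β⟨ψ, Aψ⟩}`. -/
theorem peierls_bogoliubov
    {d : ℕ} (A : Matrix (Fin d) (Fin d) ℂ) (hA : A.IsHermitian)
    (ψ : Fin d → ℂ) (hψ : star ψ ⬝ᵥ ψ = 1) (β : ℝ) (hβ : 0 ≤ β) :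
    Real.exp (-β * (star ψ ⬝ᵥ (A *ᵥ ψ)).re) ≤
      (NormedSpace.exp ((-β : ℂ) • A)).trace.re := by
  set U : Matrix (Fin d) (Fin d) ℂ := (hA.eigenvectorUnitary : Matrix (Fin d) (Fin d) ℂ) with hU
  set e : Fin d → ℝ := hA.eigenvalues with he
  have hU1 : star U * U = 1 := Unitary.coe_star_mul_self _
  have hU2 : U * star U = 1 := Unitary.coe_mul_star_self _
  have hUinv : U⁻¹ = star U := Matrix.inv_eq_left_inv hU1
  have hUunit : IsUnit U := isUnit_iff_exists.mpr ⟨star U, hU2, hU1⟩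
  set D : Matrix (Fin d) (Fin d) ℂ := diagonal (Complex.ofReal ∘ e) with hD
  have hspec : A = U * D * star U := hA.spectral_theorem
  have keyC : ∀ z : ℂ, star z * z = (Complex.normSq z : ℂ) := by
    intro z
    rw [Complex.star_def, ← Complex.normSq_eq_conj_mul_self]
  -- exponential
  have hexp : NormedSpace.exp ((-β : ℂ) • A)
      = U * diagonal (fun i => (Real.exp (-β * e i) : ℂ)) * star U := by
    have h1 : (-β : ℂ) • A = U * ((-β : ℂ) • D) * U⁻¹ := by
      rw [hspec, hUinv, Matrix.mul_smul, Matrix.smul_mul]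
    rw [h1, Matrix.exp_conj U _ hUunit, hUinv]
    congr 1
    congr 1
    have hDd : (-β : ℂ) • D = diagonal (fun i => ((-β * e i : ℝ) : ℂ)) := by
      ext i j
      rcases eq_or_ne i j with h | h
      · subst h
        simp only [hD, Matrix.smul_apply, Matrix.diagonal_apply_eq, Function.comp_apply, smul_eq_mul]
        push_cast
        ring
      · simp [hD, Matrix.diagonal_apply_ne _ h, Matrix.smul_apply, h]
    rw [hDd, Matrix.exp_diagonal]
    have hfun : (NormedSpace.exp fun i : Fin d => ((-β * e i : ℝ) : ℂ))
        = fun i => (Real.exp (-β * e i) : ℂ) := by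
      funext i
      rw [Pi.coe_exp, ← Complex.exp_eq_exp_ℂ, ← Complex.ofReal_exp]
    rw [hfun]
  have htrace : (NormedSpace.exp ((-β : ℂ) • A)).trace.re
      = ∑ i, Real.exp (-β * e i) := by
    rw [hexp, Matrix.trace_mul_cycle, hU1, Matrix.one_mul,
      Matrix.trace_diagonal, Complex.re_sum]
    simp only [Complex.ofReal_re]
  -- coordinates
  set c : Fin d → ℂ := star U *ᵥ ψ with hc
  have hstarc : star c = star ψ ᵥ* U := by
    rw [hc, Matrix.star_mulVec, Matrix.star_eq_conjTranspose, Matrix.conjTranspose_conjTranspose]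
  have hsum1 : star c ⬝ᵥ c = 1 := by
    rw [hstarc, hc, ← Matrix.dotProduct_mulVec, Matrix.mulVec_mulVec, hU2, Matrix.one_mulVec, hψ]
  have hinner : star ψ ⬝ᵥ (A *ᵥ ψ) = star c ⬝ᵥ (D *ᵥ c) := by
    rw [hspec, hstarc, hc]
    rw [← Matrix.mulVec_mulVec, ← Matrix.mulVec_mulVec, Matrix.dotProduct_mulVec]
  set w : Fin d → ℝ := fun i => Complex.normSq (c i) with hw
  have hw0 : ∀ i, 0 ≤ w i := fun i => Complex.normSq_nonneg _
  have hwsum : ∑ i, w i = 1 := by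
    have h := congrArg Complex.re hsum1
    rw [dotProduct, Complex.re_sum] at h
    simp only [Pi.star_apply, keyC, Complex.ofReal_re, Complex.one_re] at h
    exact h
  have hre : (star ψ ⬝ᵥ (A *ᵥ ψ)).re = ∑ i, w i * e i := by
    rw [hinner, dotProduct, Complex.re_sum]
    apply Finset.sum_congr rfl
    intro i _
    have h1 : star c i * (D *ᵥ c) i = (e i : ℂ) * (star c i * c i) := by
      simp only [hD, Matrix.mulVec_diagonal, Pi.star_apply, Function.comp]
      ring
    rw [h1, Pi.star_apply, keyC, ← Complex.ofReal_mul, Complex.ofReal_re]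
    simp only [hw]
    ring
  rw [htrace, hre]
  calc Real.exp (-β * ∑ i, w i * e i)
      = Real.exp (∑ i ∈ Finset.univ, w i • (-β * e i)) := by
        congr 1
        rw [Finset.mul_sum]
        apply Finset.sum_congr rfl
        intro i _
        simp only [smul_eq_mul]
        ring
    _ ≤ ∑ i, w i * Real.exp (-β * e i) := by
        have h := convexOn_exp.map_sum_le (t := Finset.univ) (w := w)
          (p := fun i => -β * e i) (fun i _ => hw0 i) hwsum (fun i _ => trivial)
        simpa using h
    _ ≤ ∑ i, Real.exp (-β * e i) := by
        apply Finset.sum_le_sum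
        intro i _
        have hwi1 : w i ≤ 1 := by
          rw [← hwsum]
          exact Finset.single_le_sum (fun j _ => hw0 j) (Finset.mem_univ i)
        nlinarith [Real.exp_pos (-β * e i), hw0 i]
end
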